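/- Let G be the complete graph on an odd number n ≥ 2 of vertices with edge weights w satisfying (1 − 1/n⁹)·w_max ≤ w_min, where w_min and w_max are the minimum and maximum edge weights and w_min ≥ 1. Let (X, Y) be a partition of V with |X| < |Y| − 1. Then for every vertex v ∈ Y, w(X ∪ {v}, Y ∖ {v}) − w(X, Y) > w_min. -/

import Mathlib

open Finset

/-- The weight of the cut `(A, Aᶜ)` in the complete graph with edge weights `w`. -/
def cutw {V : Type*} [Fintype V] [DecidableEq V] (w : V → V → ℕ) (A : Finset V) : ℕ :=
  ∑ u ∈ A, ∑ v ∈ Aᶜ, w u v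

/-- In a complete graph on an odd number `n ≥ 2` of vertices whose edge weights satisfy
`(1 − 1/n⁹)·w_max ≤ w_min` and `w_min ≥ 1`, if `(X, Xᶜ)` is a partition with
`|X| < |Xᶜ| − 1`, then moving any vertex `v ∈ Xᶜ` to `X` increases the cut weight by more
than `w_min`. -/
theorem stmt9 {V : Type*} [Fintype V] [DecidableEq V] (n : ℕ)
    (hn : Fintype.card V = n) (hodd : Odd n) (h2 : 2 ≤ n)
    (w : V → V → ℕ) (hsym : ∀ u v, w u v = w v u)
    (wmin wmax : ℕ)
    (hmin : ∀ u v : V, u ≠ v → wmin ≤ w u v)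
    (hmax : ∀ u v : V, u ≠ v → w u v ≤ wmax)
    (h1 : 1 ≤ wmin)
    (hclose : ((1 : ℚ) - 1 / (n : ℚ) ^ 9) * (wmax : ℚ) ≤ (wmin : ℚ))
    (X : Finset V) (hX : X.card + 1 < Xᶜ.card) :
    ∀ v ∈ Xᶜ, cutw w X + wmin < cutw w (insert v X) := by
  intro v hv
  have hvX : v ∉ X := by simpa using hv
  have hcards : X.card + Xᶜ.card = n := by
    rw [Finset.card_add_card_compl, hn]
  set a := X.card with ha
  set b := Xᶜ.card with hb
  have hb3 : a + 3 ≤ b := by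
    rcases hodd with ⟨k, hk⟩
    omega
  -- wmin ≤ wmax
  have hcard2 : 1 < Fintype.card V := by omega
  obtain ⟨u₀, v₀, huv⟩ := Fintype.exists_pair_of_one_lt_card hcard2
  have hmm : wmin ≤ wmax := le_trans (hmin u₀ v₀ huv) (hmax u₀ v₀ huv)
  have hw1 : 1 ≤ wmax := le_trans h1 hmm
  -- nat version of hclose : n⁹·wmax ≤ n⁹·wmin + wmax
  have hq : n ^ 9 * wmax ≤ n ^ 9 * wmin + wmax := by
    have hn0 : (0:ℚ) < (n:ℚ) ^ 9 := by positivity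
    have hinv : (n:ℚ) ^ 9 * (1 / (n:ℚ) ^ 9) = 1 := by field_simp
    rw [← Nat.cast_le (α := ℚ)]
    push_cast
    nlinarith [mul_le_mul_of_nonneg_left hclose hn0.le]
  -- a*b + 2 ≤ n⁹
  have hm2 : a * b + 2 ≤ n ^ 9 := by
    have h7 : 128 ≤ n ^ 7 := by
      calc (128:ℕ) = 2 ^ 7 := by norm_num
        _ ≤ n ^ 7 := Nat.pow_le_pow_left h2 7
    have hab : a * b ≤ n * n := Nat.mul_le_mul (by omega) (by omega)
    have h9 : n ^ 9 = n * n * n ^ 7 := by ring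
    nlinarith
  -- key : a*b*wmax < (a*b+1)*wmin
  have step1 : a * b * (n ^ 9 * wmax) ≤ a * b * (n ^ 9 * wmin + wmax) :=
    Nat.mul_le_mul_left _ hq
  have s2 : (a * b + 2) * wmax ≤ n ^ 9 * wmax := Nat.mul_le_mul_right _ hm2
  have s3 : a * b * wmax < n ^ 9 * wmin := by nlinarith
  have key : n ^ 9 * (a * b * wmax) < n ^ 9 * ((a * b + 1) * wmin) := by nlinarith
  have key2 : a * b * wmax < (a * b + 1) * wmin := Nat.lt_of_mul_lt_mul_left key
  -- bounds on cuts
  have hub : cutw w X ≤ a * b * wmax := by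
    unfold cutw
    calc ∑ u ∈ X, ∑ x ∈ Xᶜ, w u x
        ≤ ∑ u ∈ X, ∑ x ∈ Xᶜ, wmax := by
          refine Finset.sum_le_sum fun u hu => Finset.sum_le_sum fun x hx => ?_
          exact hmax u x (fun h => (Finset.mem_compl.mp hx) (h ▸ hu))
      _ = a * b * wmax := by simp [Finset.sum_const, mul_assoc]; rfl
  have hcins : (insert v X).card = a + 1 := Finset.card_insert_of_notMem hvX
  have hcomp : (insert v X)ᶜ = Xᶜ.erase v := Finset.compl_insert
  have hcins' : ((insert v X)ᶜ).card = b - 1 := by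
    rw [hcomp, Finset.card_erase_of_mem hv]
  have hlb : (a + 1) * (b - 1) * wmin ≤ cutw w (insert v X) := by
    unfold cutw
    calc (a + 1) * (b - 1) * wmin
        = ∑ u ∈ insert v X, ∑ x ∈ (insert v X)ᶜ, wmin := by
          rw [Finset.sum_const, Finset.sum_const, hcins, hcins', smul_eq_mul, smul_eq_mul]
          ring
      _ ≤ ∑ u ∈ insert v X, ∑ x ∈ (insert v X)ᶜ, w u x := by
          refine Finset.sum_le_sum fun u hu => Finset.sum_le_sum fun x hx => ?_
          exact hmin u x (fun h => (Finset.mem_compl.mp hx) (h ▸ hu))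
  have hle : (a * b + 2) * wmin ≤ (a + 1) * (b - 1) * wmin := by
    refine Nat.mul_le_mul_right _ ?_
    obtain ⟨t, ht⟩ : ∃ t, b = a + 3 + t := ⟨b - (a + 3), by omega⟩
    rw [ht]
    have h' : a + 3 + t - 1 = a + 2 + t := by omega
    have h'' : (a + 1) * (a + 2 + t) = a * (a + 3 + t) + 2 + t := by ring
    rw [h', h'']
    exact Nat.le_add_right _ t
  calc cutw w X + wmin ≤ a * b * wmax + wmin := by omega
    _ < (a * b + 2) * wmin := by nlinarith
    _ ≤ (a + 1) * (b - 1) * wmin := hle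
    _ ≤ cutw w (insert v X) := hlb
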